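/- arXiv:1803.07486 — 2 statements merged into one kernel-verified Lean document; each statement's English description precedes it below -/
import Mathlib

section
/- Let Λ be a commutative cancellative monoid (submonoid of a lattice M), R, S ∈ M, and k a field. Let ξ : Λ → k vanish on Λ(R) = {λ ∈ Λ : λ − R ∈ Λ} and be additive on Λ \ Λ(R), and let μ : Λ → k vanish on Λ(S) and be additive on Λ \ Λ(S). Define C(λ₁,λ₂) = ξ(λ₁)μ(λ₂) + ξ(λ₂)μ(λ₁) − dξ(λ₁,λ₂)·μ̃(λ₁+λ₂−R) − dμ(λ₁,λ₂)·ξ̃(λ₁+λ₂−S), where μ̃(x) = μ(x) if x ∈ Λ and 0 otherwise (similarly ξ̃), and dξ(λ₁,λ₂) = ξ(λ₁) + ξ(λ₂) − ξ(λ₁+λ₂). Then the Gerstenhaber-type bracket [dξ, dμ](λ₁,λ₂,λ₃) := dξ(λ₁+λ₂−S, λ₃)dμ(λ₁,λ₂) − dξ(λ₁, λ₂+λ₃−S)dμ(λ₂,λ₃) + dμ(λ₁+λ₂−R, λ₃)dξ(λ₁,λ₂) − dμ(λ₁, λ₂+λ₃−R)dξ(λ₂,λ₃) (with the convention that terms with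 arguments outside Λ are zero) equals dC(λ₁,λ₂,λ₃) for all (λ₁,λ₂,λ₃) ∈ Λ³ with all partial sums in Λ. -/
open scoped Classical in
/-- Sletsjøe's formula `[dξ⁰, dμ⁰] = dC` in the toric setting.
`ξ` vanishes on `Λ(R)` and outside `Λ` (extension by zero) and is additive on
`Λ \ Λ(R)`; similarly for `μ` with `S`. The Gerstenhaber-type bracket of `dξ`
and `dμ` (with the convention that terms whose shifted argument lies outside
`Λ` are zero) equals `dC` for the 2-cochain `C`. -/
theorem stmt6 {M k : Type*} [AddCommGroup M] [Field k]
    (Λ : AddSubmonoid M) (R S : M) (ξ μ : M → k)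
    (hξ_out : ∀ x : M, x ∉ Λ → ξ x = 0)
    (hξ_van : ∀ x ∈ Λ, x - R ∈ (Λ : Set M) → ξ x = 0)
    (hξ_add : ∀ a b : M, a ∈ Λ → b ∈ Λ → a + b ∈ Λ →
      a - R ∉ (Λ : Set M) → b - R ∉ (Λ : Set M) → a + b - R ∉ (Λ : Set M) →
      ξ (a + b) = ξ a + ξ b)
    (hμ_out : ∀ x : M, x ∉ Λ → μ x = 0)
    (hμ_van : ∀ x ∈ Λ, x - S ∈ (Λ : Set M) → μ x = 0)
    (hμ_add : ∀ a b : M, a ∈ Λ → b ∈ Λ → a + b ∈ Λ →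
      a - S ∉ (Λ : Set M) → b - S ∉ (Λ : Set M) → a + b - S ∉ (Λ : Set M) →
      μ (a + b) = μ a + μ b) :
    ∀ l₁ ∈ Λ, ∀ l₂ ∈ Λ, ∀ l₃ ∈ Λ,
      (let dξ : M → M → k := fun x y => ξ x + ξ y - ξ (x + y)
       let dμ : M → M → k := fun x y => μ x + μ y - μ (x + y)
       let C : M → M → k := fun x y =>
         ξ x * μ y + ξ y * μ x - dξ x y * μ (x + y - R) - dμ x y * ξ (x + y - S)
       (if l₁ + l₂ - S ∈ Λ then dξ (l₁ + l₂ - S) l₃ * dμ l₁ l₂ else 0)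
         - (if l₂ + l₃ - S ∈ Λ then dξ l₁ (l₂ + l₃ - S) * dμ l₂ l₃ else 0)
         + (if l₁ + l₂ - R ∈ Λ then dμ (l₁ + l₂ - R) l₃ * dξ l₁ l₂ else 0)
         - (if l₂ + l₃ - R ∈ Λ then dμ l₁ (l₂ + l₃ - R) * dξ l₂ l₃ else 0)
        = C l₂ l₃ - C (l₁ + l₂) l₃ + C l₁ (l₂ + l₃) - C l₁ l₂) := by
  intro l₁ h₁ l₂ h₂ l₃ h₃
  -- conditional additivity in a convenient form
  have addξ : ∀ x y : M, x ∈ Λ → y ∈ Λ → x + y - R ∉ Λ → ξ (x + y) = ξ x + ξ y := by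
    intro x y hx hy h
    refine hξ_add x y hx hy (Λ.add_mem hx hy) ?_ ?_ h
    · intro hc
      exact h (by simpa [show x - R + y = x + y - R by abel] using Λ.add_mem hc hy)
    · intro hc
      exact h (by simpa [show x + (y - R) = x + y - R by abel] using Λ.add_mem hx hc)
  have addμ : ∀ x y : M, x ∈ Λ → y ∈ Λ → x + y - S ∉ Λ → μ (x + y) = μ x + μ y := by
    intro x y hx hy h
    refine hμ_add x y hx hy (Λ.add_mem hx hy) ?_ ?_ h
    · intro hc
      exact h (by simpa [show x - S + y = x + y - S by abel] using Λ.add_mem hc hy)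
    · intro hc
      exact h (by simpa [show x + (y - S) = x + y - S by abel] using Λ.add_mem hx hc)
  simp only
  have e1 : (if l₁ + l₂ - S ∈ Λ then
        (ξ (l₁ + l₂ - S) + ξ l₃ - ξ (l₁ + l₂ - S + l₃)) * (μ l₁ + μ l₂ - μ (l₁ + l₂)) else 0)
      = (μ l₁ + μ l₂ - μ (l₁ + l₂)) *
        (ξ l₃ + ξ (l₁ + l₂ - S) - ξ (l₁ + l₂ + l₃ - S)) := by
    split_ifs with h
    · rw [show l₁ + l₂ - S + l₃ = l₁ + l₂ + l₃ - S by abel]; ring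
    · rw [addμ l₁ l₂ h₁ h₂ h]; ring
  have e2 : (if l₂ + l₃ - S ∈ Λ then
        (ξ l₁ + ξ (l₂ + l₃ - S) - ξ (l₁ + (l₂ + l₃ - S))) * (μ l₂ + μ l₃ - μ (l₂ + l₃)) else 0)
      = (μ l₂ + μ l₃ - μ (l₂ + l₃)) *
        (ξ l₁ + ξ (l₂ + l₃ - S) - ξ (l₁ + l₂ + l₃ - S)) := by
    split_ifs with h
    · rw [show l₁ + (l₂ + l₃ - S) = l₁ + l₂ + l₃ - S by abel]; ring
    · rw [addμ l₂ l₃ h₂ h₃ h]; ring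
  have e3 : (if l₁ + l₂ - R ∈ Λ then
        (μ (l₁ + l₂ - R) + μ l₃ - μ (l₁ + l₂ - R + l₃)) * (ξ l₁ + ξ l₂ - ξ (l₁ + l₂)) else 0)
      = (ξ l₁ + ξ l₂ - ξ (l₁ + l₂)) *
        (μ l₃ + μ (l₁ + l₂ - R) - μ (l₁ + l₂ + l₃ - R)) := by
    split_ifs with h
    · rw [show l₁ + l₂ - R + l₃ = l₁ + l₂ + l₃ - R by abel]; ring
    · rw [addξ l₁ l₂ h₁ h₂ h]; ring
  have e4 : (if l₂ + l₃ - R ∈ Λ then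
        (μ l₁ + μ (l₂ + l₃ - R) - μ (l₁ + (l₂ + l₃ - R))) * (ξ l₂ + ξ l₃ - ξ (l₂ + l₃)) else 0)
      = (ξ l₂ + ξ l₃ - ξ (l₂ + l₃)) *
        (μ l₁ + μ (l₂ + l₃ - R) - μ (l₁ + l₂ + l₃ - R)) := by
    split_ifs with h
    · rw [show l₁ + (l₂ + l₃ - R) = l₁ + l₂ + l₃ - R by abel]; ring
    · rw [addξ l₂ l₃ h₂ h₃ h]; ring
  rw [e1, e2, e3, e4, show l₁ + (l₂ + l₃) = l₁ + l₂ + l₃ from (add_assoc _ _ _).symm]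
  ring
end

section
/- With V = {t ∈ k^N : Σ t_j d_j = 0} and the bilinear map t ∪ s = class of (t₁s₁d₁,…,t_N s_N d_N) in ker η / im δ as above: if at least two of the vectors d_j, d_i with lattice length ≥ 2 are non-parallel, then t ∪ s = 0 for all t, s ∈ V. -/
open Finset in
open scoped Classical in
/-- in the setup of the cup product for 3-dimensional toric
Gorenstein singularities (edge vectors `d_j` of a lattice polygon, `δ_j = 1`
iff `ℓ(d_j) ≥ 2`, `U_j = ⟨δ_j d_j⟩`), if at least two of the edges of lattice
length `≥ 2` are non-parallel, then `t ∪ s = 0` for all `t, s ∈ V`: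
the tuple `(t_j s_j d_j)_j` lies in `im δ` modulo the `U_j`. -/
theorem stmt10 {k : Type*} [Field k] [CharZero k]
    (n : ℕ) (a : Fin (n + 1) → ℤ × ℤ) (d : Fin (n + 1) → ℤ × ℤ)
    (hd : ∀ j, d j = a (j + 1) - a j)
    (hlong : ∃ i j : Fin (n + 1),
      (∃ (e : ℤ × ℤ) (m : ℕ), 2 ≤ m ∧ d i = m • e) ∧
      (∃ (e : ℤ × ℤ) (m : ℕ), 2 ≤ m ∧ d j = m • e) ∧
      ¬∃ (p q : ℤ), (p ≠ 0 ∨ q ≠ 0) ∧ p • d i = q • d j) :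
    let dk : Fin (n + 1) → k × k := fun j => (((d j).1 : k), ((d j).2 : k))
    let U : Fin (n + 1) → Submodule k (k × k) := fun j =>
      if ∃ (e : ℤ × ℤ) (m : ℕ), 2 ≤ m ∧ d j = m • e then Submodule.span k {dk j} else ⊥
    ∀ t s : Fin (n + 1) → k,
      (∑ j, t j • dk j = 0) → (∑ j, s j • dk j = 0) →
      ∃ b : Fin (n + 1) → k × k, ∀ j,
        (t j * s j) • dk j - (b j - b (j + 1)) ∈ U j := by
  intro dk U t s ht hs
  classical
  obtain ⟨i₀, j₀, hi, hj, hnp⟩ := hlong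
  have hij : i₀ ≠ j₀ := by
    rintro rfl
    exact hnp ⟨1, 1, Or.inl one_ne_zero, rfl⟩
  set x := d i₀ with hx
  set y := d j₀ with hy
  -- the two long edges are genuinely independent
  have hD0 : x.1 * y.2 - x.2 * y.1 ≠ 0 := by
    intro h
    apply hnp
    rcases ne_or_eq y.1 0 with h1 | h1
    · exact ⟨y.1, x.1, Or.inl h1, by
        simp only [Prod.ext_iff, Prod.smul_def, smul_eq_mul]
        constructor <;> nlinarith⟩
    rcases ne_or_eq x.1 0 with h2 | h2
    · exact ⟨y.1, x.1, Or.inr h2, by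
        simp only [Prod.ext_iff, Prod.smul_def, smul_eq_mul]
        constructor <;> nlinarith⟩
    rcases ne_or_eq y.2 0 with h3 | h3
    · exact ⟨y.2, x.2, Or.inl h3, by
        simp only [Prod.ext_iff, Prod.smul_def, smul_eq_mul]
        constructor <;> nlinarith⟩
    rcases ne_or_eq x.2 0 with h4 | h4
    · exact ⟨y.2, x.2, Or.inr h4, by
        simp only [Prod.ext_iff, Prod.smul_def, smul_eq_mul]
        constructor <;> nlinarith⟩
    · refine ⟨1, 0, Or.inl one_ne_zero, ?_⟩
      have hx0 : x = 0 := by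
        apply Prod.ext <;> simp [h2, h4]
      simp [hx0]
  set X1 : k := ((x.1 : ℤ) : k) with hX1
  set X2 : k := ((x.2 : ℤ) : k) with hX2
  set Y1 : k := ((y.1 : ℤ) : k) with hY1
  set Y2 : k := ((y.2 : ℤ) : k) with hY2
  have hdki : dk i₀ = (X1, X2) := rfl
  have hdkj : dk j₀ = (Y1, Y2) := rfl
  have hDk : X1 * Y2 - X2 * Y1 ≠ 0 := by
    have : X1 * Y2 - X2 * Y1 = ((x.1 * y.2 - x.2 * y.1 : ℤ) : k) := by
      push_cast [hX1, hX2, hY1, hY2]; ring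
    rw [this]
    exact_mod_cast Int.cast_ne_zero.mpr hD0
  -- dk i₀, dk j₀ span k × k
  have span : ∀ w : k × k, ∃ α β : k, α • dk i₀ + β • dk j₀ = w := by
    intro w
    refine ⟨(w.1 * Y2 - w.2 * Y1) / (X1 * Y2 - X2 * Y1),
            (X1 * w.2 - X2 * w.1) / (X1 * Y2 - X2 * Y1), ?_⟩
    apply Prod.ext <;>
      simp only [hdki, hdkj, Prod.smul_def, smul_eq_mul, Prod.fst_add, Prod.snd_add] <;>
      rw [div_mul_eq_mul_div, div_mul_eq_mul_div, ← add_div, div_eq_iff hDk] <;> ring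
  -- the "long" predicate
  set Long : Fin (n + 1) → Prop :=
    fun l => ∃ (e : ℤ × ℤ) (m : ℕ), 2 ≤ m ∧ d l = m • e with hLongDef
  have hUdef : ∀ l, U l = if Long l then Submodule.span k {dk l} else ⊥ := fun l => rfl
  have hLi : Long i₀ := hi
  have hLj : Long j₀ := hj
  -- the sum of short contributions
  set v : k × k := ∑ l, (if Long l then (0 : k) else t l * s l) • dk l with hvdef
  obtain ⟨α, β, hαβ⟩ := span (-v)
  set c : Fin (n + 1) → k := fun l =>
    if l = i₀ then α else if l = j₀ then β else if Long l then 0 else t l * s l with hc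
  set f : Fin (n + 1) → k × k := fun l => c l • dk l with hf
  have hfsum : ∑ l, f l = 0 := by
    have e1 : ∑ l, f l =
        f i₀ + (f j₀ + ∑ l ∈ (univ.erase i₀).erase j₀, f l) := by
      rw [Finset.add_sum_erase _ f (Finset.mem_erase.mpr ⟨Ne.symm hij, Finset.mem_univ _⟩),
        Finset.add_sum_erase _ f (Finset.mem_univ i₀)]
    have e2 : v = (0 : k × k) + ((0 : k × k) +
        ∑ l ∈ (univ.erase i₀).erase j₀, (if Long l then (0 : k) else t l * s l) • dk l) := by
      rw [hvdef,
        ← Finset.add_sum_erase _ _ (Finset.mem_univ i₀),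
        ← Finset.add_sum_erase _ _ (Finset.mem_erase.mpr ⟨Ne.symm hij, Finset.mem_univ _⟩)]
      simp [hLi, hLj]
    have e3 : ∑ l ∈ (univ.erase i₀).erase j₀, f l
        = ∑ l ∈ (univ.erase i₀).erase j₀, (if Long l then (0 : k) else t l * s l) • dk l := by
      apply Finset.sum_congr rfl
      intro l hl
      simp only [Finset.mem_erase] at hl
      simp [hf, hc, hl.1, hl.2.1]
    have hfi : f i₀ = α • dk i₀ := by simp [hf, hc]
    have hfj : f j₀ = β • dk j₀ := by simp [hf, hc, Ne.symm hij]
    have : ∑ l, f l = α • dk i₀ + β • dk j₀ + v := by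
      rw [e1, e3, hfi, hfj]
      rw [e2]
      abel
    rw [this, hαβ]
    abel
  -- partial sums
  set b : Fin (n + 1) → k × k :=
    fun m => -∑ l ∈ univ.filter (fun l : Fin (n + 1) => (l : ℕ) < (m : ℕ)), f l with hb
  have key : ∀ j : Fin (n + 1), b j - b (j + 1) = f j := by
    intro j
    by_cases hjn : (j : ℕ) < n
    · have hsucc : ((j + 1 : Fin (n + 1)) : ℕ) = (j : ℕ) + 1 :=
        Fin.val_add_one_of_lt (by rw [Fin.lt_def, Fin.val_last]; exact hjn)
      have hins : univ.filter (fun l : Fin (n + 1) => (l : ℕ) < (j : ℕ) + 1)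
          = insert j (univ.filter fun l : Fin (n + 1) => (l : ℕ) < (j : ℕ)) := by
        ext l
        simp only [Finset.mem_filter, Finset.mem_univ, true_and, Finset.mem_insert, Fin.ext_iff]
        omega
      have hnot : j ∉ univ.filter (fun l : Fin (n + 1) => (l : ℕ) < (j : ℕ)) := by simp
      rw [hb]
      simp only [hsucc, hins, Finset.sum_insert hnot]
      abel
    · have hjn' : (j : ℕ) = n := by omega
      have hlast : j + 1 = 0 := by
        apply Fin.ext
        simp [Fin.add_def, hjn']
      have h0 : univ.filter (fun l : Fin (n + 1) => (l : ℕ) < ((0 : Fin (n+1)) : ℕ)) = ∅ := by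
        ext l; simp
      have herase : univ.filter (fun l : Fin (n + 1) => (l : ℕ) < (j : ℕ))
          = univ.erase j := by
        ext l
        simp only [Finset.mem_filter, Finset.mem_univ, true_and, Finset.mem_erase, and_true,
          ne_eq, Fin.ext_iff]
        have h1 := l.isLt
        omega
      rw [hb, hlast]
      simp only [h0, Finset.sum_empty, neg_zero, sub_zero, herase,
        Finset.sum_erase_eq_sub (Finset.mem_univ j), hfsum]
      abel
  refine ⟨b, fun j => ?_⟩
  rw [key j, hUdef j]
  by_cases hL : Long j
  · rw [if_pos hL]
    have : (t j * s j) • dk j - f j = (t j * s j - c j) • dk j := by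
      rw [hf, sub_smul]
    rw [this]
    exact Submodule.smul_mem _ _ (Submodule.mem_span_singleton_self _)
  · rw [if_neg hL]
    have hji : j ≠ i₀ := fun h => hL (h ▸ hLi)
    have hjj : j ≠ j₀ := fun h => hL (h ▸ hLj)
    have : f j = (t j * s j) • dk j := by simp [hf, hc, hji, hjj, hL]
    rw [this, sub_self]
    exact Submodule.zero_mem _
end
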